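/- arXiv:2310.13509 — 2 statements merged into one kernel-verified Lean document; each statement's English description precedes it below -/
import Mathlib

section
/- If p is a rational prime and K a number field such that for some positive integer f the number of distinct prime ideals of the ring of integers of K lying above p with residue degree f exceeds the number of monic irreducible polynomials of degree f in 𝔽_p[x], then p divides the index of every algebraic integer θ generating K, i.e., p divides (Z_K : ℤ[θ]) for every primitive integer θ of K. -/
open NumberField Polynomial

/-- The index `(Z_K : ℤ[θ])` of the additive subgroup `ℤ[θ]` in the ring of integers. -/
noncomputable def indexZtheta {K : Type*} [Field K] [NumberField K] (θ : 𝓞 K) : ℕ :=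
  (Subalgebra.toSubmodule (Algebra.adjoin ℤ {θ})).toAddSubgroup.index

/-- `θ` is a primitive integer of `K`, i.e. `K = ℚ(θ)`. -/
def IsPrimitiveInt {K : Type*} [Field K] [NumberField K] (θ : 𝓞 K) : Prop :=
  Algebra.adjoin ℚ {(θ : K)} = ⊤

/-- The number of distinct prime ideals of `Z_K` lying above `p` with residue degree `f`. -/
noncomputable def primeCount (K : Type*) [Field K] [NumberField K] (p f : ℕ) : ℕ :=
  Nat.card {P : Ideal (𝓞 K) // P.IsPrime ∧
    Ideal.comap (algebraMap ℤ (𝓞 K)) P = Ideal.span {(p : ℤ)} ∧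
    Ideal.inertiaDeg' (Ideal.span {(p : ℤ)}) P = f}

/-- The number of monic irreducible polynomials of degree `f` over `𝔽_p`. -/
noncomputable def irredCount (p f : ℕ) : ℕ :=
  Nat.card {g : Polynomial (ZMod p) // g.Monic ∧ Irreducible g ∧ g.natDegree = f}

/-- If `p` does not divide the index of `θ`, then every element of `𝓞 K` is congruent to a
polynomial in `θ` with integer coefficients, modulo `p`. -/
lemma gen_of_not_dvd_index {K : Type*} [Field K] [NumberField K] (p : ℕ) (hp : p.Prime)
    (θ : 𝓞 K) (hnd : ¬ p ∣ indexZtheta θ) (a : 𝓞 K) :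
    ∃ H : ℤ[X], a - aeval θ H ∈ Ideal.span {(p : 𝓞 K)} := by
  set A := (Subalgebra.toSubmodule (Algebra.adjoin ℤ {θ})).toAddSubgroup with hA
  set Pg := (Ideal.span {(p : 𝓞 K)}).toAddSubgroup with hPg
  have hA0 : A.index ≠ 0 := fun e => hnd (by rw [indexZtheta, ← hA, e]; exact dvd_zero p)
  have hBd : (A ⊔ Pg).index ∣ A.index := AddSubgroup.index_dvd_of_le le_sup_left
  have hB0 : (A ⊔ Pg).index ≠ 0 := fun e => hA0 (Nat.eq_zero_of_zero_dvd (e ▸ hBd))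
  have hpB : ¬ p ∣ (A ⊔ Pg).index := fun hd => hnd (hd.trans hBd)
  have hBtop : A ⊔ Pg = ⊤ := by
    have hfin : Finite (𝓞 K ⧸ (A ⊔ Pg)) := by
      rw [AddSubgroup.index] at hB0
      exact (Nat.card_ne_zero.mp hB0).2
    have hzero : ∀ q : 𝓞 K ⧸ (A ⊔ Pg), q = 0 := by
      intro q
      obtain ⟨a, rfl⟩ := QuotientAddGroup.mk_surjective q
      have hsm : p • ((a : 𝓞 K ⧸ (A ⊔ Pg))) = 0 := by
        have : ((p • a : 𝓞 K) : 𝓞 K ⧸ (A ⊔ Pg)) = p • ((a : 𝓞 K ⧸ (A ⊔ Pg))) := rfl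
        rw [← this, QuotientAddGroup.eq_zero_iff]
        refine AddSubgroup.mem_sup_right ?_
        have : (p • a : 𝓞 K) ∈ Ideal.span {(p : 𝓞 K)} :=
          Ideal.mem_span_singleton.mpr ⟨a, by simp [nsmul_eq_mul]⟩
        exact this
      have h1 : addOrderOf ((a : 𝓞 K ⧸ (A ⊔ Pg))) ∣ p := addOrderOf_dvd_of_nsmul_eq_zero hsm
      have h2 : addOrderOf ((a : 𝓞 K ⧸ (A ⊔ Pg))) ∣ Nat.card (𝓞 K ⧸ (A ⊔ Pg)) :=
        addOrderOf_dvd_natCard _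
      rcases (Nat.Prime.eq_one_or_self_of_dvd hp _ h1) with h | h
      · exact AddMonoid.addOrderOf_eq_one_iff.mp h
      · exact absurd (h ▸ h2) (by rwa [AddSubgroup.index] at hpB)
    rw [AddSubgroup.eq_top_iff']
    intro x
    rw [← QuotientAddGroup.eq_zero_iff]
    exact hzero _
  have ha : a ∈ A ⊔ Pg := hBtop ▸ AddSubgroup.mem_top a
  obtain ⟨x, hx, y, hy, hxy⟩ := AddSubgroup.mem_sup.mp ha
  have hx' : x ∈ Algebra.adjoin ℤ {θ} := hx
  rw [Algebra.adjoin_singleton_eq_range_aeval, AlgHom.mem_range] at hx'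
  obtain ⟨H, rfl⟩ := hx'
  exact ⟨H, by rw [show a - aeval θ H = y by rw [← hxy]; ring]; exact hy⟩

lemma aeval_mem_span_of_map_eq_zero {K : Type*} [Field K] [NumberField K] (p : ℕ)
    (θ : 𝓞 K) (D : ℤ[X]) (hD : D.map (Int.castRingHom (ZMod p)) = 0) :
    aeval θ D ∈ Ideal.span {(p : 𝓞 K)} := by
  rw [aeval_eq_sum_range]
  refine Ideal.sum_mem _ fun i _ => ?_
  have hcoeff : ((D.coeff i : ℤ) : ZMod p) = 0 := by
    have := congrArg (fun q => Polynomial.coeff q i) hD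
    simpa [Polynomial.coeff_map] using this
  obtain ⟨b, hb⟩ := (ZMod.intCast_zmod_eq_zero_iff_dvd _ _).mp hcoeff
  refine Ideal.mem_span_singleton.mpr ⟨(b : 𝓞 K) * θ ^ i, ?_⟩
  rw [hb, zsmul_eq_mul]
  push_cast
  ring

set_option maxHeartbeats 1000000 in
set_option synthInstance.maxHeartbeats 400000 in
/-- The key per-prime construction: a monic irreducible polynomial of degree `f` over `𝔽_p`
determining `P`. -/
lemma key_poly {K : Type*} [Field K] [NumberField K] (p : ℕ) (hp : p.Prime) (f : ℕ)
    (θ : 𝓞 K)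
    (hgen : ∀ a : 𝓞 K, ∃ H : ℤ[X], a - aeval θ H ∈ Ideal.span {(p : 𝓞 K)})
    (P : Ideal (𝓞 K)) (hP1 : P.IsPrime)
    (hP2 : Ideal.comap (algebraMap ℤ (𝓞 K)) P = Ideal.span {(p : ℤ)})
    (hP3 : Ideal.inertiaDeg' (Ideal.span {(p : ℤ)}) P = f) :
    ∃ g : Polynomial (ZMod p), g.Monic ∧ Irreducible g ∧ g.natDegree = f ∧
      ∀ G : ℤ[X], G.map (Int.castRingHom (ZMod p)) = g →
        P = Ideal.span {(p : 𝓞 K)} ⊔ Ideal.span {aeval θ G} := by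
  haveI : NeZero p := ⟨hp.ne_zero⟩
  haveI : Fact p.Prime := ⟨hp⟩
  have hp0 : ((p : ℤ) : ℤ) ≠ 0 := by exact_mod_cast Nat.cast_ne_zero.mpr hp.ne_zero
  have hPbot : P ≠ ⊥ := by
    rintro rfl
    rw [← RingHom.ker_eq_comap_bot] at hP2
    have : (p : ℤ) ∈ RingHom.ker (algebraMap ℤ (𝓞 K)) := hP2 ▸ Ideal.mem_span_singleton_self _
    rw [RingHom.mem_ker] at this
    have : ((p : ℤ) : 𝓞 K) = 0 := by rw [← this]; simp [algebraMap_int_eq]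
    exact hp.ne_zero (by exact_mod_cast this)
  haveI hPmax : P.IsMaximal := hP1.isMaximal hPbot
  letI : Field (𝓞 K ⧸ P) := Ideal.Quotient.field P
  have hpP : (p : 𝓞 K) ∈ P := by
    have h1 : (p : ℤ) ∈ Ideal.comap (algebraMap ℤ (𝓞 K)) P :=
      hP2 ▸ Ideal.mem_span_singleton_self _
    rw [Ideal.mem_comap] at h1
    simpa using h1
  haveI hchar : CharP (𝓞 K ⧸ P) p := by
    refine (CharP.charP_iff_prime_eq_zero hp).mpr ?_
    rw [← map_natCast (Ideal.Quotient.mk P), Ideal.Quotient.eq_zero_iff_mem]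
    exact hpP
  letI : Algebra (ZMod p) (𝓞 K ⧸ P) := ZMod.algebra _ p
  set θb := Ideal.Quotient.mk P θ with hθb
  haveI : Fintype (𝓞 K ⧸ P) := @Fintype.ofFinite _ (Ideal.finiteQuotientOfFreeOfNeBot P hPbot)
  haveI : Module.Finite (ZMod p) (𝓞 K ⧸ P) := Module.Finite.of_finite
  have hint : IsIntegral (ZMod p) θb := IsIntegral.of_finite _ _
  -- bridge: reduction of integer polynomials evaluated at θ
  have hbridge : ∀ H : ℤ[X], Ideal.Quotient.mk P (aeval θ H)
      = aeval θb (H.map (Int.castRingHom (ZMod p))) := by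
    intro H
    rw [aeval_def, aeval_def, Polynomial.hom_eval₂, Polynomial.eval₂_map]
    exact congrFun (congrArg (fun φ => Polynomial.eval₂ φ θb) (RingHom.ext_int _ _)) H
  refine ⟨minpoly (ZMod p) θb, minpoly.monic hint, minpoly.irreducible hint, ?_, ?_⟩
  · -- degree = f
    letI : Algebra (ℤ ⧸ Ideal.span {(p : ℤ)}) (𝓞 K ⧸ P) :=
      Ideal.Quotient.algebraQuotientOfLEComap (le_of_eq hP2.symm)
    have h1 : Module.finrank (ℤ ⧸ Ideal.span {(p : ℤ)}) (𝓞 K ⧸ P) = f := by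
      rw [← hP3, Ideal.inertiaDeg', dif_pos hP2]
    haveI : (Ideal.span {(p : ℤ)}).IsMaximal :=
      PrincipalIdealRing.isMaximal_of_irreducible (Nat.prime_iff_prime_int.mp hp).irreducible
    letI : Field (ℤ ⧸ Ideal.span {(p : ℤ)}) := Ideal.Quotient.field _
    haveI : Fintype (ℤ ⧸ Ideal.span {(p : ℤ)}) :=
      Fintype.ofEquiv (ZMod p) (Int.quotientSpanNatEquivZMod p).symm.toEquiv
    have hcard0 : Fintype.card (ℤ ⧸ Ideal.span {(p : ℤ)}) = p := by
      exact (Fintype.card_congr (Int.quotientSpanNatEquivZMod p).toEquiv).trans (ZMod.card p)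
    have hc1 : Fintype.card (𝓞 K ⧸ P) = p ^ f := by
      rw [Module.card_eq_pow_finrank (K := ℤ ⧸ Ideal.span {(p : ℤ)}) (V := 𝓞 K ⧸ P), hcard0, h1]
    have hc2 : Fintype.card (𝓞 K ⧸ P)
        = p ^ Module.finrank (ZMod p) (𝓞 K ⧸ P) := by
      rw [Module.card_eq_pow_finrank (K := ZMod p) (V := 𝓞 K ⧸ P), ZMod.card]
    have hfr : Module.finrank (ZMod p) (𝓞 K ⧸ P) = f :=
      Nat.pow_right_injective hp.two_le (hc2.symm.trans hc1)
    -- θb generates the residue field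
    have hadj : Algebra.adjoin (ZMod p) {θb} = ⊤ := by
      rw [Algebra.adjoin_singleton_eq_range_aeval, eq_top_iff]
      rintro y -
      obtain ⟨a, rfl⟩ := Ideal.Quotient.mk_surjective y
      obtain ⟨H, hH⟩ := hgen a
      have hsub : a - aeval θ H ∈ P :=
        ((Ideal.span_singleton_le_iff_mem _).mpr hpP) hH
      have : Ideal.Quotient.mk P a = Ideal.Quotient.mk P (aeval θ H) :=
        Ideal.Quotient.mk_eq_mk_iff_sub_mem a (aeval θ H) |>.mpr hsub
      rw [this, hbridge H]
      exact ⟨H.map (Int.castRingHom (ZMod p)), rfl⟩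
    have htop : IntermediateField.adjoin (ZMod p) {θb} = ⊤ := by
      apply IntermediateField.toSubalgebra_injective
      rw [IntermediateField.adjoin_simple_toSubalgebra_of_isAlgebraic hint.isAlgebraic, hadj,
        IntermediateField.top_toSubalgebra]
    have h3 := IntermediateField.adjoin.finrank hint
    rw [htop, IntermediateField.finrank_top', hfr] at h3
    exact h3.symm
  · -- P is determined by the polynomial
    intro G hG
    have hGP : aeval θ G ∈ P := by
      rw [← Ideal.Quotient.eq_zero_iff_mem, hbridge G, hG]
      exact minpoly.aeval _ _
    refine le_antisymm ?_ ?_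
    · -- P ≤ span p ⊔ span (G(θ))
      intro a ha
      obtain ⟨H, hH⟩ := hgen a
      have h5 : aeval θ H ∈ P := by
        have : aeval θ H = a - (a - aeval θ H) := by ring
        rw [this]
        exact P.sub_mem ha (((Ideal.span_singleton_le_iff_mem _).mpr hpP) hH)
      have h6 : aeval θb (H.map (Int.castRingHom (ZMod p))) = 0 := by
        rw [← hbridge, Ideal.Quotient.eq_zero_iff_mem]
        exact h5
      obtain ⟨q, hq⟩ := minpoly.dvd (ZMod p) θb h6
      obtain ⟨Q, rfl⟩ := Polynomial.map_surjective (Int.castRingHom (ZMod p)) ZMod.intCast_surjective q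
      have h8 : (H - G * Q).map (Int.castRingHom (ZMod p)) = 0 := by
        rw [Polynomial.map_sub, Polynomial.map_mul, hG, hq]
        ring
      have h9 : aeval θ (H - G * Q) ∈ Ideal.span {(p : 𝓞 K)} :=
        aeval_mem_span_of_map_eq_zero p θ _ h8
      have hdecomp : a = (a - aeval θ H) + aeval θ (H - G * Q)
          + aeval θ G * aeval θ Q := by
        simp only [map_sub, map_mul]
        ring
      rw [hdecomp]
      refine add_mem (add_mem ?_ ?_) ?_
      · exact Ideal.mem_sup_left hH
      · exact Ideal.mem_sup_left h9
      · exact Ideal.mem_sup_right (Ideal.mem_span_singleton.mpr ⟨aeval θ Q, rfl⟩)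
    · exact sup_le ((Ideal.span_singleton_le_iff_mem _).mpr hpP)
        ((Ideal.span_singleton_le_iff_mem _).mpr hGP)

/-- If for some `f ≥ 1` the number of primes above `p` of residue degree `f` exceeds the
number of monic irreducible polynomials of degree `f` over `𝔽_p`, then `p` divides the
index of every primitive integer of `K`. -/
theorem prime_common_index_divisor {K : Type*} [Field K] [NumberField K]
    (p : ℕ) (hp : p.Prime) (f : ℕ) (hf : 0 < f)
    (h : irredCount p f < primeCount K p f) :
    ∀ θ : 𝓞 K, IsPrimitiveInt θ → p ∣ indexZtheta θ := by
  intro θ _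
  by_contra hnd
  haveI : NeZero p := ⟨hp.ne_zero⟩
  have hgen := gen_of_not_dvd_index p hp θ hnd
  -- the target type is finite
  haveI hfinT : Finite {g : Polynomial (ZMod p) // g.Monic ∧ Irreducible g ∧ g.natDegree = f} := by
    refine Finite.of_injective
      (fun g : {g : Polynomial (ZMod p) // g.Monic ∧ Irreducible g ∧ g.natDegree = f} =>
        (fun i : Fin (f + 1) => (g : Polynomial (ZMod p)).coeff i)) ?_
    intro g1 g2 hgg
    apply Subtype.ext
    apply Polynomial.ext
    intro n
    by_cases hn : n ≤ f
    · exact congrFun hgg ⟨n, Nat.lt_succ_of_le hn⟩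
    · rw [Polynomial.coeff_eq_zero_of_natDegree_lt (by rw [g1.2.2.2]; omega),
        Polynomial.coeff_eq_zero_of_natDegree_lt (by rw [g2.2.2.2]; omega)]
  -- choose polynomials for each prime
  have hex : ∀ P : {P : Ideal (𝓞 K) // P.IsPrime ∧
      Ideal.comap (algebraMap ℤ (𝓞 K)) P = Ideal.span {(p : ℤ)} ∧
      Ideal.inertiaDeg' (Ideal.span {(p : ℤ)}) P = f},
      ∃ g : Polynomial (ZMod p), g.Monic ∧ Irreducible g ∧ g.natDegree = f ∧
        ∀ G : ℤ[X], G.map (Int.castRingHom (ZMod p)) = g →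
          (P : Ideal (𝓞 K)) = Ideal.span {(p : 𝓞 K)} ⊔ Ideal.span {aeval θ G} :=
    fun P => key_poly p hp f θ hgen P P.2.1 P.2.2.1 P.2.2.2
  choose g hg1 hg2 hg3 hg4 using hex
  have hinj : Function.Injective
      (fun P => (⟨g P, hg1 P, hg2 P, hg3 P⟩ :
        {g : Polynomial (ZMod p) // g.Monic ∧ Irreducible g ∧ g.natDegree = f})) := by
    intro P Q hPQ
    have hgPQ : g P = g Q := congrArg Subtype.val hPQ
    obtain ⟨G, hG⟩ := Polynomial.map_surjective (Int.castRingHom (ZMod p)) ZMod.intCast_surjective (g P)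
    apply Subtype.ext
    rw [hg4 P G hG, hg4 Q G (by rw [hG, hgPQ])]
  have := Nat.card_le_card_of_injective _ hinj
  rw [← primeCount, ← irredCount] at this
  omega
end

section
/- Let K be a number field defined by a monic irreducible trinomial F(x) = x^9 + a·x^2 + b ∈ ℤ[x] with 7 ∤ b. Then 7 does not divide the index i(K). -/
set_option maxHeartbeats 1000000
set_option synthInstance.maxHeartbeats 400000


open NumberField Polynomial
open scoped nonZeroDivisors

/-- If `K` is defined by an irreducible trinomial `x^9 + a x^2 + b` with `7 ∤ b`,
then `7` does not divide the index `i(K)`. -/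
theorem seven_not_dvd_index {K : Type*} [Field K] [NumberField K] (a b : ℤ)
    (hirr : Irreducible (X ^ 9 + C a * X ^ 2 + C b : Polynomial ℤ))
    (α : 𝓞 K) (hroot : Polynomial.aeval α (X ^ 9 + C a * X ^ 2 + C b : Polynomial ℤ) = 0)
    (hgen : Algebra.adjoin ℚ {(α : K)} = ⊤)
    (hb : ¬ (7 : ℤ) ∣ b) :
    ∃ θ : 𝓞 K, IsPrimitiveInt θ ∧ ¬ 7 ∣ indexZtheta θ := by
  refine ⟨α, hgen, ?_⟩
  intro h7
  set F : ℤ[X] := X ^ 9 + C a * X ^ 2 + C b with hF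
  have hmonic : F.Monic := by rw [hF]; monicity!
  have hdeg : F.natDegree = 9 := by rw [hF]; compute_degree!
  have hintZ : IsIntegral ℤ ((α : K)) := RingOfIntegers.isIntegral_coe α
  have hroot' : aeval ((α : K)) F = 0 := by
    have : aeval (algebraMap (𝓞 K) K α) F = algebraMap (𝓞 K) K (aeval α F) :=
      aeval_algebraMap_apply K α F
    rw [hroot, map_zero] at this
    exact this
  have hFQ : Irreducible (F.map (algebraMap ℤ ℚ)) := by
    rw [algebraMap_int_eq]
    exact (IsPrimitive.Int.irreducible_iff_irreducible_map_cast hmonic.isPrimitive).mp hirr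
  have hmin : minpoly ℚ ((α : K)) = F.map (algebraMap ℤ ℚ) := by
    refine (minpoly.eq_of_irreducible_of_monic hFQ ?_ (hmonic.map _)).symm
    rw [aeval_map_algebraMap]; exact hroot'
  have hintQ : IsIntegral ℚ ((α : K)) := IsIntegral.of_finite ℚ _
  let B : PowerBasis ℚ K :=
    (Algebra.adjoin.powerBasis hintQ).map
      ((Subalgebra.equivOfEq _ _ hgen).trans Subalgebra.topEquiv)
  have hBgen : B.gen = (α : K) := rfl
  have hBdim : B.dim = 9 := by
    show (minpoly ℚ ((α : K))).natDegree = 9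
    rw [hmin, hmonic.natDegree_map, hdeg]
  -- the derivative evaluated at α
  set β : 𝓞 K := aeval α (derivative F) with hβdef
  have hβ : aeval B.gen (derivative (R := ℚ) (minpoly ℚ B.gen)) = algebraMap (𝓞 K) K β := by
    rw [hBgen, hmin, derivative_map, aeval_map_algebraMap]
    exact aeval_algebraMap_apply K α (derivative F)
  have hD : Algebra.discr ℚ B.basis ≠ 0 := Algebra.discr_not_zero_of_basis ℚ B.basis
  have hfr : Module.finrank ℚ K = 9 := by rw [← hBdim]; exact B.finrank
  have hDnorm : Algebra.discr ℚ B.basis = Algebra.norm ℚ (algebraMap (𝓞 K) K β) := by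
    rw [Algebra.discr_powerBasis_eq_norm, hβ, hfr]
    norm_num
  set d : ℤ := Algebra.norm ℤ β with hd
  have hdQ : algebraMap ℤ ℚ d = Algebra.norm ℚ (algebraMap (𝓞 K) K β) :=
    (Algebra.norm_localization ℤ ℤ⁰ β).symm
  have hd0 : d ≠ 0 := by
    intro h
    exact hD (by rw [hDnorm, ← hdQ, h, map_zero])
  have hβ0 : β ≠ 0 := by
    intro h
    exact hD (by rw [hDnorm, h, map_zero, Algebra.norm_zero])
  -- key arithmetic fact : 7 ∤ d
  have key : ¬ (7 : ℤ) ∣ d := by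
    intro h7d
    set J : Ideal (𝓞 K) := Ideal.span {β} with hJ
    have hJbot : J ≠ ⊥ := by
      simpa [hJ, Ideal.span_singleton_eq_bot] using hβ0
    letI : Fintype (𝓞 K ⧸ J) := @Fintype.ofFinite _ (Ideal.finiteQuotientOfFreeOfNeBot J hJbot)
    have hcard : Fintype.card (𝓞 K ⧸ J) = d.natAbs := by
      rw [← Nat.card_eq_fintype_card, ← Submodule.cardQuot_apply, ← Ideal.absNorm_apply,
        Ideal.absNorm_span_singleton]
    haveI : Fact (Nat.Prime 7) := ⟨by norm_num⟩
    obtain ⟨x, hx⟩ := exists_prime_addOrderOf_dvd_card (G := 𝓞 K ⧸ J) 7 (by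
      rw [hcard]
      have : (7 : ℤ).natAbs ∣ d.natAbs := Int.natAbs_dvd_natAbs.mpr h7d
      simpa using this)
    -- the identity α * β = 7 * (-(a) * α^2) - 9 * b
    have h0 : α ^ 9 + (a : 𝓞 K) * α ^ 2 + (b : 𝓞 K) = 0 := by
      have := hroot
      rw [hF] at this
      simpa [map_add, map_mul, map_pow, aeval_X, aeval_C, algebraMap_int_eq] using this
    have hβeq : β = 9 * α ^ 8 + 2 * (a : 𝓞 K) * α := by
      rw [hβdef, hF]
      simp [derivative_X_pow, map_add, map_mul, map_pow, map_ofNat, algebraMap_int_eq]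
      ring
    have hidentity : (α * β : 𝓞 K) = 7 * (-(a : 𝓞 K) * α ^ 2) + (-(9 * b) : ℤ) := by
      rw [hβeq]
      push_cast
      linear_combination (9 : 𝓞 K) * h0
    -- push to the quotient
    have hπβ : (Ideal.Quotient.mk J) β = 0 :=
      Ideal.Quotient.eq_zero_iff_mem.mpr (Ideal.subset_span rfl)
    have h9b : ((9 * b : ℤ) : 𝓞 K ⧸ J) =
        7 * (-(a : 𝓞 K ⧸ J) * (Ideal.Quotient.mk J α) ^ 2) := by
      have h := congrArg (Ideal.Quotient.mk J) hidentity
      simp only [map_mul, map_add, map_pow, map_neg, map_intCast, map_ofNat, hπβ, mul_zero] at h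
      push_cast at h ⊢
      linear_combination h
    have h7x : (7 : ℕ) • x = 0 := by
      rw [← hx]; exact addOrderOf_nsmul_eq_zero x
    have h9bx : (9 * b : ℤ) • x = 0 := by
      have h7Q : ((7 : 𝓞 K ⧸ J)) * x = 0 := by
        have : ((7 : 𝓞 K ⧸ J)) * x = (7 : ℕ) • x := by rw [nsmul_eq_mul]; norm_num
        rw [this, h7x]
      rw [zsmul_eq_mul, h9b, mul_comm (7 : 𝓞 K ⧸ J), mul_assoc, h7Q, mul_zero]
    have h7dvd : ((addOrderOf x : ℤ)) ∣ 9 * b :=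
      addOrderOf_dvd_iff_zsmul_eq_zero.mpr h9bx
    rw [hx] at h7dvd
    have hp7 : Prime (7 : ℤ) := by norm_num
    rcases hp7.dvd_mul.mp h7dvd with h | h
    · norm_num at h
    · exact hb h
  -- now conclude : index divides |d|^n
  have hdz : ∀ z : 𝓞 K, algebraMap ℤ (𝓞 K) d * z ∈ Algebra.adjoin ℤ ({α} : Set (𝓞 K)) := by
    intro z
    have hgenB : IsIntegral ℤ B.gen := by rw [hBgen]; exact hintZ
    have h1 : Algebra.discr ℚ B.basis • (algebraMap (𝓞 K) K z) ∈
        Algebra.adjoin ℤ ({B.gen} : Set K) :=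
      Algebra.discr_mul_isIntegral_mem_adjoin (R := ℤ) ℚ hgenB (RingOfIntegers.isIntegral_coe z)
    rw [hBgen] at h1
    have hDd : Algebra.discr ℚ B.basis = algebraMap ℤ ℚ d := by rw [hDnorm, ← hdQ]
    have h2 : Algebra.discr ℚ B.basis • (algebraMap (𝓞 K) K z)
        = algebraMap (𝓞 K) K (algebraMap ℤ (𝓞 K) d * z) := by
      rw [hDd, Algebra.smul_def, map_mul]
      congr 1
      rw [← IsScalarTower.algebraMap_apply, ← IsScalarTower.algebraMap_apply]
    rw [h2] at h1
    have h3 : Algebra.adjoin ℤ ({((α : K))} : Set K) =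
        (Algebra.adjoin ℤ ({α} : Set (𝓞 K))).map (IsScalarTower.toAlgHom ℤ (𝓞 K) K) := by
      rw [AlgHom.map_adjoin]
      congr 1
      simp
    rw [h3] at h1
    obtain ⟨y, hy, hyx⟩ := h1
    have : y = algebraMap ℤ (𝓞 K) d * z := by
      apply IsFractionRing.injective (𝓞 K) K
      exact hyx
    rwa [← this]
  set J2 : Ideal (𝓞 K) := Ideal.span {algebraMap ℤ (𝓞 K) d} with hJ2
  have hle : J2.toAddSubgroup ≤
      (Subalgebra.toSubmodule (Algebra.adjoin ℤ {α})).toAddSubgroup := by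
    intro y hy
    obtain ⟨z, rfl⟩ := Ideal.mem_span_singleton'.mp hy
    simpa [mul_comm] using hdz z
  have hdvd : indexZtheta α ∣ J2.toAddSubgroup.index := AddSubgroup.index_dvd_of_le hle
  have hJ2card : J2.toAddSubgroup.index = (Algebra.norm ℤ (algebraMap ℤ (𝓞 K) d)).natAbs := by
    show Nat.card (𝓞 K ⧸ J2) = _
    rw [← Submodule.cardQuot_apply, ← Ideal.absNorm_apply, Ideal.absNorm_span_singleton]
  have hnorm : Algebra.norm ℤ (algebraMap ℤ (𝓞 K) d) =
      d ^ Fintype.card (Module.Free.ChooseBasisIndex ℤ (𝓞 K)) :=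
    Algebra.norm_algebraMap_of_basis (Module.Free.chooseBasis ℤ (𝓞 K)) d
  have h7d : (7 : ℤ) ∣ d := by
    have h1 : 7 ∣ (d ^ Fintype.card (Module.Free.ChooseBasisIndex ℤ (𝓞 K))).natAbs := by
      rw [← hnorm, ← hJ2card]
      exact h7.trans hdvd
    have h2 : (7 : ℤ) ∣ d ^ Fintype.card (Module.Free.ChooseBasisIndex ℤ (𝓞 K)) :=
      Int.natAbs_dvd_natAbs.mp (by simpa using h1)
    have hp7 : Prime (7 : ℤ) := by norm_num
    exact hp7.dvd_of_dvd_pow h2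
  exact key h7d
end
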